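/- Let B be a real symmetric positive semidefinite n×n matrix and let 1 ≤ p ≤ n. Every local maximum of the function Π ↦ trace(Π B) on the set of rank-p orthogonal projectors is a global maximum: if Π₀ is a rank-p orthogonal projector that is a local maximizer of Π ↦ trace(Π B) on this set (with respect to the topology it inherits as a subset of the n×n real matrices), then trace(Π₀ B) ≥ trace(Π B) for every rank-p orthogonal projector Π. -/

import Mathlib

open Matrix


-- small vecMulVec algebra helpers
lemma vv_transpose {n : ℕ} (a b : Fin n → ℝ) : (vecMulVec a b)ᵀ = vecMulVec b a := by
  ext i j; simp [vecMulVec_apply, mul_comm]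

lemma mul_vv {n : ℕ} (M : Matrix (Fin n) (Fin n) ℝ) (a b : Fin n → ℝ) :
    M * vecMulVec a b = vecMulVec (M *ᵥ a) b := by
  ext i j
  simp [Matrix.mul_apply, vecMulVec_apply, Matrix.mulVec, dotProduct, Finset.sum_mul, mul_assoc]

lemma vv_mul {n : ℕ} (a b : Fin n → ℝ) (M : Matrix (Fin n) (Fin n) ℝ) :
    vecMulVec a b * M = vecMulVec a (Mᵀ *ᵥ b) := by
  ext i j
  simp [Matrix.mul_apply, vecMulVec_apply, Matrix.mulVec, dotProduct, Finset.mul_sum,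
    Matrix.transpose_apply]
  congr 1; ext k; ring

lemma vv_mul_vv {n : ℕ} (a b c d : Fin n → ℝ) :
    vecMulVec a b * vecMulVec c d = (b ⬝ᵥ c) • vecMulVec a d := by
  ext i j
  simp [Matrix.mul_apply, vecMulVec_apply, dotProduct, Finset.sum_mul, Finset.mul_sum]
  congr 1; ext k; ring

lemma smul_vv {n : ℕ} (c : ℝ) (a b : Fin n → ℝ) :
    vecMulVec (c • a) b = c • vecMulVec a b := by
  ext i j; simp [vecMulVec_apply, mul_assoc]

lemma trace_vv {n : ℕ} (a b : Fin n → ℝ) : (vecMulVec a b).trace = a ⬝ᵥ b := by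
  simp [Matrix.trace, Matrix.diag, vecMulVec_apply, dotProduct]

lemma trace_vv_mul {n : ℕ} (a b : Fin n → ℝ) (M : Matrix (Fin n) (Fin n) ℝ) :
    (vecMulVec a b * M).trace = b ⬝ᵥ (M *ᵥ a) := by
  rw [vv_mul, trace_vv]
  simp [dotProduct, Matrix.mulVec, Matrix.transpose_apply, Finset.mul_sum, dotProduct]
  rw [Finset.sum_comm]
  congr 1; ext k; congr 1; ext i; ring

lemma dp_shift {n : ℕ} (M : Matrix (Fin n) (Fin n) ℝ) (hM : Mᵀ = M) (x y : Fin n → ℝ) :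
    (M *ᵥ x) ⬝ᵥ y = x ⬝ᵥ (M *ᵥ y) := by
  rw [← hM, Matrix.dotProduct_mulVec, Matrix.vecMul_transpose, hM]


lemma trace_eq_rank_proj {n : ℕ} (A : Matrix (Fin n) (Fin n) ℝ) (h : A * A = A) :
    A.trace = (A.rank : ℝ) := by
  have hproj : LinearMap.IsProj (LinearMap.range A.mulVecLin) A.mulVecLin := by
    constructor
    · intro x; exact LinearMap.mem_range_self _ x
    · rintro x ⟨y, rfl⟩
      show A.mulVecLin (A.mulVecLin y) = A.mulVecLin y
      have := congrArg (fun M : Matrix (Fin n) (Fin n) ℝ => M.mulVecLin y) h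
      simpa [Matrix.mulVecLin_mul] using this
  have ht := hproj.trace
  rw [Matrix.rank, ← ht,
    LinearMap.trace_eq_matrix_trace ℝ (Pi.basisFun ℝ (Fin n)),
    LinearMap.toMatrix_eq_toMatrix', ← Matrix.toLin'_apply', LinearMap.toMatrix'_toLin']


lemma psd_real {n : ℕ} {X : Matrix (Fin n) (Fin n) ℝ} (hX : X.PosSemidef) (x : Fin n → ℝ) :
    0 ≤ x ⬝ᵥ (X *ᵥ x) := by
  have := hX.dotProduct_mulVec_nonneg x
  simpa using this

lemma psd_of_quad {n : ℕ} {X : Matrix (Fin n) (Fin n) ℝ} (hsym : Xᵀ = X)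
    (h : ∀ x : Fin n → ℝ, 0 ≤ x ⬝ᵥ (X *ᵥ x)) : X.PosSemidef := by
  apply Matrix.PosSemidef.of_dotProduct_mulVec_nonneg
  · show Xᴴ = X
    simpa using hsym
  · intro x; simpa using h x

lemma psd_trace_nonneg {n : ℕ} {X : Matrix (Fin n) (Fin n) ℝ} (hX : X.PosSemidef) :
    0 ≤ X.trace := by
  apply Finset.sum_nonneg
  intro i _
  have := psd_real hX (Pi.single i 1)
  simpa [Matrix.mulVec_single, single_dotProduct] using this

lemma trace_proj_mul_nonneg {n : ℕ} {P X : Matrix (Fin n) (Fin n) ℝ}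
    (hs : Pᵀ = P) (hi : P * P = P) (hX : X.PosSemidef) : 0 ≤ (P * X).trace := by
  have h1 : (P * X * Pᴴ).PosSemidef := hX.mul_mul_conjTranspose_same P
  have h2 : (P * X * Pᴴ).trace = (P * X).trace := by
    have : Pᴴ = P := by simpa using hs
    rw [this, Matrix.trace_mul_cycle, hi]
  rw [← h2]
  exact psd_trace_nonneg h1

lemma trace_proj_mul_le {n : ℕ} {P X : Matrix (Fin n) (Fin n) ℝ}
    (hs : Pᵀ = P) (hi : P * P = P) (hX : X.PosSemidef) : (P * X).trace ≤ X.trace := by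
  have hs' : (1 - P)ᵀ = 1 - P := by simp [Matrix.transpose_sub, hs]
  have hi' : (1 - P) * (1 - P) = 1 - P := by
    simp [Matrix.mul_sub, Matrix.sub_mul, hi]
  have := trace_proj_mul_nonneg hs' hi' hX
  rw [Matrix.sub_mul, Matrix.one_mul, Matrix.trace_sub] at this
  linarith

lemma key_ineq {n p : ℕ} (B : Matrix (Fin n) (Fin n) ℝ) (hBsym : Bᵀ = B)
    (P₀ : Matrix (Fin n) (Fin n) ℝ) (hsym : P₀ᵀ = P₀) (hidem : P₀ * P₀ = P₀)
    (hrank : P₀.rank = p)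
    (hloc : IsLocalMaxOn (fun P : Matrix (Fin n) (Fin n) ℝ => (P * B).trace)
      {P : Matrix (Fin n) (Fin n) ℝ | Pᵀ = P ∧ P * P = P ∧ P.rank = p} P₀)
    (u v : Fin n → ℝ) (hu1 : u ⬝ᵥ u = 1) (hu : P₀ *ᵥ u = u)
    (hv1 : v ⬝ᵥ v = 1) (hv : P₀ *ᵥ v = 0) :
    u ⬝ᵥ (B *ᵥ v) = 0 ∧ v ⬝ᵥ (B *ᵥ v) ≤ u ⬝ᵥ (B *ᵥ u) := by
  set α := u ⬝ᵥ (B *ᵥ u) with hα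
  set β := v ⬝ᵥ (B *ᵥ v) with hβ
  set γ := u ⬝ᵥ (B *ᵥ v) with hγ
  have huv : u ⬝ᵥ v = 0 := by
    have : (P₀ *ᵥ u) ⬝ᵥ v = u ⬝ᵥ (P₀ *ᵥ v) := dp_shift P₀ hsym u v
    rw [hu, hv, dotProduct_zero] at this
    exact this
  have hvu : v ⬝ᵥ u = 0 := by rw [dotProduct_comm]; exact huv
  have hγ' : v ⬝ᵥ (B *ᵥ u) = γ := by
    rw [hγ, dotProduct_comm, dp_shift B hBsym]
  set w : ℝ → Fin n → ℝ := fun t => Real.cos t • u + Real.sin t • v with hw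
  set Pt : ℝ → Matrix (Fin n) (Fin n) ℝ :=
    fun t => P₀ - vecMulVec u u + vecMulVec (w t) (w t) with hPt
  have hwdp : ∀ (x : Fin n → ℝ) t, x ⬝ᵥ w t = Real.cos t * (x ⬝ᵥ u) + Real.sin t * (x ⬝ᵥ v) := by
    intro x t
    simp [hw, dotProduct_add, dotProduct_smul, smul_eq_mul, mul_comm]
  have hww : ∀ t, w t ⬝ᵥ w t = 1 := by
    intro t
    simp only [hw, add_dotProduct, smul_dotProduct, smul_eq_mul]
    rw [hwdp u t, hwdp v t]
    simp [hu1, hv1, huv, hvu]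
    nlinarith [Real.sin_sq_add_cos_sq t]
  have hPw : ∀ t, P₀ *ᵥ w t = Real.cos t • u := by
    intro t
    simp [hw, Matrix.mulVec_add, Matrix.mulVec_smul, hu, hv]
  have huw : ∀ t, u ⬝ᵥ w t = Real.cos t := by
    intro t; rw [hwdp u t, hu1, huv]; ring
  -- the curve stays in the constraint set
  have hmem : ∀ t, Pt t ∈ {P : Matrix (Fin n) (Fin n) ℝ | Pᵀ = P ∧ P * P = P ∧ P.rank = p} := by
    intro t
    have hQs : (P₀ - vecMulVec u u)ᵀ = P₀ - vecMulVec u u := by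
      rw [Matrix.transpose_sub, hsym, vv_transpose]
    have hWs : (vecMulVec (w t) (w t))ᵀ = vecMulVec (w t) (w t) := vv_transpose _ _
    have hsymt : (Pt t)ᵀ = Pt t := by
      rw [hPt]; simp only [Matrix.transpose_add, hQs, hWs]
    have hQW : (P₀ - vecMulVec u u) * vecMulVec (w t) (w t) = 0 := by
      rw [Matrix.sub_mul, mul_vv, vv_mul_vv, hPw t, huw t, smul_vv]
      simp
    have hWQ : vecMulVec (w t) (w t) * (P₀ - vecMulVec u u) = 0 := by
      have := congrArg Matrix.transpose hQW
      rw [Matrix.transpose_mul, hQs, hWs] at this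
      simpa using this
    have hQQ : (P₀ - vecMulVec u u) * (P₀ - vecMulVec u u) = P₀ - vecMulVec u u := by
      rw [Matrix.sub_mul, Matrix.mul_sub, Matrix.mul_sub, hidem, mul_vv, vv_mul, vv_mul_vv,
        hu, hsym, hu, hu1]
      simp
    have hWW : vecMulVec (w t) (w t) * vecMulVec (w t) (w t) = vecMulVec (w t) (w t) := by
      rw [vv_mul_vv, hww t, one_smul]
    have hidemt : Pt t * Pt t = Pt t := by
      rw [hPt]
      simp only [Matrix.add_mul, Matrix.mul_add, hQQ, hWW, hQW, hWQ]
      simp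
    refine ⟨hsymt, hidemt, ?_⟩
    have htr : (Pt t).trace = P₀.trace := by
      rw [hPt, Matrix.trace_add, Matrix.trace_sub, trace_vv, trace_vv, hu1, hww t]
      ring
    have h1 : ((Pt t).rank : ℝ) = (p : ℝ) := by
      rw [← trace_eq_rank_proj _ hidemt, htr, trace_eq_rank_proj _ hidem, hrank]
    exact_mod_cast h1
  -- value of the objective along the curve
  have hval : ∀ t, (Pt t * B).trace
      = (P₀ * B).trace + ((β - α) * Real.sin t ^ 2 + (2 * γ) * (Real.sin t * Real.cos t)) := by
    intro t
    have hwBw : w t ⬝ᵥ (B *ᵥ w t)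
        = Real.cos t ^ 2 * α + 2 * (Real.sin t * Real.cos t) * γ + Real.sin t ^ 2 * β := by
      simp only [hw, add_dotProduct, smul_dotProduct, Matrix.mulVec_add,
        Matrix.mulVec_smul, dotProduct_add, dotProduct_smul, smul_eq_mul]
      rw [← hα, ← hβ, ← hγ]
      rw [show v ⬝ᵥ (B *ᵥ u) = γ from hγ']
      ring
    rw [hPt, Matrix.add_mul, Matrix.sub_mul, Matrix.trace_add, Matrix.trace_sub,
      trace_vv_mul, trace_vv_mul, ← hα, hwBw]
    have : Real.cos t ^ 2 = 1 - Real.sin t ^ 2 := by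
      nlinarith [Real.sin_sq_add_cos_sq t]
    rw [this]; ring
  -- local maximality along the curve
  have hcontw : Continuous w := by
    apply Continuous.add
    · exact Real.continuous_cos.smul continuous_const
    · exact Real.continuous_sin.smul continuous_const
  have hcontP : Continuous Pt := by
    apply Continuous.add
    · exact continuous_const
    · exact hcontw.matrix_vecMulVec hcontw
  have hP0 : Pt 0 = P₀ := by
    have hw0 : w 0 = u := by simp [hw]
    simp only [hPt, hw0]
    simp
  have hev : ∀ᶠ t in nhds (0 : ℝ),
      (β - α) * Real.sin t ^ 2 + (2 * γ) * (Real.sin t * Real.cos t) ≤ 0 := by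
    have htend : Filter.Tendsto Pt (nhds 0)
        (nhdsWithin P₀ {P : Matrix (Fin n) (Fin n) ℝ | Pᵀ = P ∧ P * P = P ∧ P.rank = p}) := by
      rw [tendsto_nhdsWithin_iff]
      constructor
      · rw [← hP0]; exact hcontP.continuousAt.tendsto
      · exact Filter.Eventually.of_forall hmem
    have := htend.eventually hloc
    filter_upwards [this] with t ht
    have := hval t
    simp only [this] at ht
    linarith
  set F : ℝ → ℝ := fun t => (β - α) * Real.sin t ^ 2 + (2 * γ) * (Real.sin t * Real.cos t)
    with hF
  have hF0 : F 0 = 0 := by simp [hF]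
  have hmax : IsLocalMax F 0 := by
    rw [IsLocalMax, IsMaxFilter, hF0]
    exact hev
  have hder : HasDerivAt F (2 * γ) 0 := by
    have hs : HasDerivAt Real.sin 1 0 := by simpa using Real.hasDerivAt_sin 0
    have hc : HasDerivAt Real.cos 0 0 := by simpa using Real.hasDerivAt_cos 0
    have h1 : HasDerivAt (fun t => Real.sin t ^ 2) 0 0 := by
      have := hs.fun_pow 2
      simpa using this
    have h2 : HasDerivAt (fun t => Real.sin t * Real.cos t) 1 0 := by
      have := hs.fun_mul hc
      simpa using this
    have := ((h1.const_mul (β - α)).fun_add (h2.const_mul (2 * γ)))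
    simpa [hF] using this
  have hγ0 : γ = 0 := by
    have := hmax.deriv_eq_zero
    rw [hder.deriv] at this
    linarith
  refine ⟨hγ0, ?_⟩
  -- now use a positive t with sin t > 0
  have hev' : ∀ᶠ t in nhdsWithin (0 : ℝ) (Set.Ioi 0),
      (β - α) * Real.sin t ^ 2 ≤ 0 := by
    apply Filter.Eventually.filter_mono nhdsWithin_le_nhds
    filter_upwards [hev] with t ht
    rw [hγ0] at ht
    linarith
  have hltpi : ∀ᶠ t in nhdsWithin (0 : ℝ) (Set.Ioi 0), t < Real.pi := by
    apply Filter.Eventually.filter_mono nhdsWithin_le_nhds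
    exact eventually_lt_nhds Real.pi_pos
  have hpos : ∀ᶠ t in nhdsWithin (0 : ℝ) (Set.Ioi 0), 0 < t :=
    eventually_mem_nhdsWithin.mono (fun t ht => ht)
  obtain ⟨t, h1, h2, h3⟩ := (hev'.and (hltpi.and hpos)).exists
  have hsin : 0 < Real.sin t := Real.sin_pos_of_pos_of_lt_pi h3 h2
  nlinarith [pow_pos hsin 2]

-- normalization helper
lemma normalize_vec {n : ℕ} (y : Fin n → ℝ) (hy : y ≠ 0) :
    ∃ r : ℝ, 0 < r ∧ r ^ 2 * (y ⬝ᵥ y) = 1 ∧ (r • y) ⬝ᵥ (r • y) = 1 := by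
  have h0 : 0 ≤ y ⬝ᵥ y := by
    simp only [dotProduct]
    exact Finset.sum_nonneg fun i _ => mul_self_nonneg _
  have hpos : 0 < y ⬝ᵥ y :=
    lt_of_le_of_ne h0 (fun h => hy (dotProduct_self_eq_zero.mp h.symm))
  refine ⟨(Real.sqrt (y ⬝ᵥ y))⁻¹, by positivity, ?_, ?_⟩
  · rw [inv_pow, Real.sq_sqrt h0]
    exact inv_mul_cancel₀ hpos.ne'
  · rw [smul_dotProduct, dotProduct_smul, smul_eq_mul, smul_eq_mul, ← mul_assoc,
      ← pow_two, inv_pow, Real.sq_sqrt h0]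
    exact inv_mul_cancel₀ hpos.ne'

/-- Paper's Proposition 9: the Grassmann manifold in its projector
representation satisfies Assumption 2, i.e. every local maximum of
`Π ↦ trace(Π B)` (with `B` symmetric positive semidefinite) on the set of
rank-`p` orthogonal projectors is a global maximum. -/
theorem stmt6 {n p : ℕ} (hp : 1 ≤ p) (hpn : p ≤ n)
    (B : Matrix (Fin n) (Fin n) ℝ) (hB : B.PosSemidef)
    (P₀ : Matrix (Fin n) (Fin n) ℝ)
    (hP₀ : P₀ᵀ = P₀ ∧ P₀ * P₀ = P₀ ∧ P₀.rank = p)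
    (hloc : IsLocalMaxOn (fun P : Matrix (Fin n) (Fin n) ℝ => (P * B).trace)
      {P : Matrix (Fin n) (Fin n) ℝ | Pᵀ = P ∧ P * P = P ∧ P.rank = p} P₀) :
    ∀ P : Matrix (Fin n) (Fin n) ℝ, Pᵀ = P → P * P = P → P.rank = p →
      (P * B).trace ≤ (P₀ * B).trace := by
  obtain ⟨hsym, hidem, hrank⟩ := hP₀
  have hBsym : Bᵀ = B := by simpa using hB.1.eq
  have key := key_ineq B hBsym P₀ hsym hidem hrank hloc
  -- off-diagonal vanishing, scaled version
  have hOff : ∀ a b : Fin n → ℝ, P₀ *ᵥ a = a → P₀ *ᵥ b = 0 → a ⬝ᵥ (B *ᵥ b) = 0 := by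
    intro a b ha hb
    by_cases ha0 : a = 0
    · simp [ha0]
    by_cases hb0 : b = 0
    · simp [hb0]
    obtain ⟨r, hr, -, hr1⟩ := normalize_vec a ha0
    obtain ⟨s, hs, -, hs1⟩ := normalize_vec b hb0
    have hP₀a : P₀ *ᵥ (r • a) = r • a := by rw [Matrix.mulVec_smul, ha]
    have hP₀b : P₀ *ᵥ (s • b) = 0 := by rw [Matrix.mulVec_smul, hb, smul_zero]
    have h := (key (r • a) (s • b) hr1 hP₀a hs1 hP₀b).1
    rw [smul_dotProduct, Matrix.mulVec_smul, dotProduct_smul,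
      smul_eq_mul, smul_eq_mul] at h
    rcases mul_eq_zero.mp h with h' | h'
    · exact absurd h' hr.ne'
    rcases mul_eq_zero.mp h' with h'' | h''
    · exact absurd h'' hs.ne'
    · exact h''
  -- matrix identity: P₀ * B * (1 - P₀) = 0
  have hOffM : P₀ * B * (1 - P₀) = 0 := by
    ext i j
    have e1 : (P₀ * B * (1 - P₀)) i j
        = Pi.single i 1 ⬝ᵥ ((P₀ * B * (1 - P₀)) *ᵥ Pi.single j 1) := by
      rw [Matrix.mulVec_single, single_dotProduct]
      simp
    rw [e1]
    have e2 : (P₀ * B * (1 - P₀)) *ᵥ Pi.single j 1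
        = P₀ *ᵥ (B *ᵥ ((1 - P₀) *ᵥ Pi.single j 1)) := by
      rw [Matrix.mulVec_mulVec, Matrix.mulVec_mulVec]
    rw [e2, ← dp_shift P₀ hsym]
    have ha : P₀ *ᵥ (P₀ *ᵥ Pi.single i 1) = P₀ *ᵥ Pi.single i 1 := by
      rw [Matrix.mulVec_mulVec, hidem]
    have hb : P₀ *ᵥ ((1 - P₀) *ᵥ Pi.single j 1) = 0 := by
      rw [Matrix.mulVec_mulVec, Matrix.mul_sub, Matrix.mul_one, hidem, sub_self,
        Matrix.zero_mulVec]
    rw [hOff _ _ ha hb]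
    simp
  have hPBP : P₀ * B * P₀ = P₀ * B := by
    have : P₀ * B * (1 - P₀) = P₀ * B - P₀ * B * P₀ := by
      rw [Matrix.mul_sub, Matrix.mul_one]
    rw [this] at hOffM
    linear_combination (norm := noncomm_ring) -hOffM
  have hcomm : P₀ * B = B * P₀ := by
    have h := congrArg Matrix.transpose hOffM
    rw [Matrix.transpose_mul, Matrix.transpose_mul, Matrix.transpose_sub,
      Matrix.transpose_one, hsym, hBsym, Matrix.transpose_zero] at h
    -- h : (1 - P₀) * (B * P₀) = 0
    have h2 : B * P₀ - P₀ * (B * P₀) = 0 := by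
      rw [← h]; rw [Matrix.sub_mul, Matrix.one_mul]
    have h3 : P₀ * (B * P₀) = B * P₀ := by
      linear_combination (norm := noncomm_ring) -h2
    rw [← hPBP, Matrix.mul_assoc, h3]
  -- the infimum
  set Sset : Set ℝ := (fun u : Fin n → ℝ => u ⬝ᵥ (B *ᵥ u)) '' {u | u ⬝ᵥ u = 1 ∧ P₀ *ᵥ u = u}
    with hSset
  have hne : Sset.Nonempty := by
    have hP0ne : P₀ ≠ 0 := by
      intro h
      rw [h, Matrix.rank_zero] at hrank
      omega
    have hex : ∃ x : Fin n → ℝ, P₀ *ᵥ x ≠ 0 := by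
      by_contra hcon
      push_neg at hcon
      apply hP0ne
      ext i j
      have := congrFun (hcon (Pi.single j 1)) i
      simpa using this
    obtain ⟨x, hx⟩ := hex
    obtain ⟨r, hr, -, hr1⟩ := normalize_vec (P₀ *ᵥ x) hx
    refine ⟨_, ⟨r • (P₀ *ᵥ x), ⟨hr1, ?_⟩, rfl⟩⟩
    rw [Matrix.mulVec_smul, Matrix.mulVec_mulVec, hidem]
  have hbdd : BddBelow Sset := by
    refine ⟨0, ?_⟩
    rintro x ⟨u, -, rfl⟩
    exact psd_real hB u
  set c : ℝ := sInf Sset with hc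
  -- X = P₀ B P₀ - c P₀ is PSD
  have hXpsd : (P₀ * B * P₀ - c • P₀).PosSemidef := by
    apply psd_of_quad
    · rw [Matrix.transpose_sub, Matrix.transpose_smul, hsym]
      simp [Matrix.transpose_mul, hsym, hBsym, Matrix.mul_assoc]
    intro x
    set y := P₀ *ᵥ x with hy
    have e1 : x ⬝ᵥ ((P₀ * B * P₀ - c • P₀) *ᵥ x) = y ⬝ᵥ (B *ᵥ y) - c * (y ⬝ᵥ y) := by
      rw [Matrix.sub_mulVec, dotProduct_sub, Matrix.smul_mulVec,
        dotProduct_smul, smul_eq_mul]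
      congr 1
      · rw [← Matrix.mulVec_mulVec, ← Matrix.mulVec_mulVec, ← dp_shift P₀ hsym x, ← hy]
      · congr 1
        conv_lhs => rw [← hidem, ← Matrix.mulVec_mulVec, ← dp_shift P₀ hsym x, ← hy]
    rw [e1]
    by_cases hy0 : y = 0
    · simp [hy0]
    obtain ⟨r, hr, hr2, hr1⟩ := normalize_vec y hy0
    have hmem : (r • y) ⬝ᵥ (B *ᵥ (r • y)) ∈ Sset := by
      refine ⟨r • y, ⟨hr1, ?_⟩, rfl⟩
      rw [Matrix.mulVec_smul, hy, Matrix.mulVec_mulVec, hidem]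
    have hcle : c ≤ (r • y) ⬝ᵥ (B *ᵥ (r • y)) := csInf_le hbdd hmem
    rw [smul_dotProduct, Matrix.mulVec_smul, dotProduct_smul,
      smul_eq_mul, smul_eq_mul, ← mul_assoc, ← pow_two] at hcle
    have hypos : 0 < y ⬝ᵥ y := by
      rcases lt_or_eq_of_le (by
        simp only [dotProduct]; exact Finset.sum_nonneg fun i _ => mul_self_nonneg _ :
          (0:ℝ) ≤ y ⬝ᵥ y) with h | h
      · exact h
      · exact absurd (dotProduct_self_eq_zero.mp h.symm) hy0
    have hmul := mul_le_mul_of_nonneg_right hcle hypos.le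
    have heq : r ^ 2 * (y ⬝ᵥ (B *ᵥ y)) * (y ⬝ᵥ y) = y ⬝ᵥ (B *ᵥ y) := by
      linear_combination (y ⬝ᵥ (B *ᵥ y)) * hr2
    linarith
  -- Y = c (1 - P₀) - (1-P₀) B (1-P₀) is PSD
  have hYpsd : (c • (1 - P₀) - (1 - P₀) * B * (1 - P₀)).PosSemidef := by
    have hsym' : (1 - P₀)ᵀ = 1 - P₀ := by rw [Matrix.transpose_sub, Matrix.transpose_one, hsym]
    apply psd_of_quad
    · rw [Matrix.transpose_sub, Matrix.transpose_smul, hsym']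
      simp [Matrix.transpose_mul, hsym', hBsym, Matrix.mul_assoc]
    intro x
    set z := (1 - P₀) *ᵥ x with hz
    have hidem' : (1 - P₀) * (1 - P₀) = 1 - P₀ := by
      rw [Matrix.mul_sub, Matrix.sub_mul, Matrix.sub_mul, hidem]
      simp
    have e1 : x ⬝ᵥ ((c • (1 - P₀) - (1 - P₀) * B * (1 - P₀)) *ᵥ x)
        = c * (z ⬝ᵥ z) - z ⬝ᵥ (B *ᵥ z) := by
      rw [Matrix.sub_mulVec, dotProduct_sub, Matrix.smul_mulVec,
        dotProduct_smul, smul_eq_mul]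
      congr 1
      · congr 1
        conv_lhs => rw [← hidem', ← Matrix.mulVec_mulVec, ← dp_shift (1 - P₀) hsym' x, ← hz]
      · rw [← Matrix.mulVec_mulVec, ← Matrix.mulVec_mulVec, ← dp_shift (1 - P₀) hsym' x, ← hz]
    rw [e1]
    by_cases hz0 : z = 0
    · simp [hz0]
    obtain ⟨r, hr, hr2, hr1⟩ := normalize_vec z hz0
    have hPz : P₀ *ᵥ z = 0 := by
      rw [hz, Matrix.mulVec_mulVec, Matrix.mul_sub, Matrix.mul_one, hidem, sub_self,
        Matrix.zero_mulVec]
    have hPv : P₀ *ᵥ (r • z) = 0 := by rw [Matrix.mulVec_smul, hPz, smul_zero]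
    have hvle : (r • z) ⬝ᵥ (B *ᵥ (r • z)) ≤ c := by
      apply le_csInf hne
      rintro q ⟨u, ⟨hu1, huP⟩, rfl⟩
      exact (key u (r • z) hu1 huP hr1 hPv).2
    rw [smul_dotProduct, Matrix.mulVec_smul, dotProduct_smul,
      smul_eq_mul, smul_eq_mul, ← mul_assoc, ← pow_two] at hvle
    have hzpos : 0 < z ⬝ᵥ z := by
      rcases lt_or_eq_of_le (by
        simp only [dotProduct]; exact Finset.sum_nonneg fun i _ => mul_self_nonneg _ :
          (0:ℝ) ≤ z ⬝ᵥ z) with h | h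
      · exact h
      · exact absurd (dotProduct_self_eq_zero.mp h.symm) hz0
    have hmul := mul_le_mul_of_nonneg_right hvle hzpos.le
    have heq : r ^ 2 * (z ⬝ᵥ (B *ᵥ z)) * (z ⬝ᵥ z) = z ⬝ᵥ (B *ᵥ z) := by
      linear_combination (z ⬝ᵥ (B *ᵥ z)) * hr2
    linarith
  -- final computation
  intro P hPs hPi hPr
  have htrP₀ : P₀.trace = (p : ℝ) := by rw [trace_eq_rank_proj P₀ hidem, hrank]
  have htrP : P.trace = (p : ℝ) := by rw [trace_eq_rank_proj P hPi, hPr]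
  have hdecomp : P₀ * B * P₀ + (1 - P₀) * B * (1 - P₀) = B := by
    have h1 : (1 - P₀) * B * (1 - P₀) = B - P₀ * B := by
      rw [Matrix.sub_mul, Matrix.one_mul, Matrix.mul_sub, Matrix.mul_one, Matrix.sub_mul,
        hPBP, ← hcomm]
      abel
    rw [h1, hPBP]
    abel
  have h1 := trace_proj_mul_le hPs hPi hXpsd
  have h2 := trace_proj_mul_nonneg hPs hPi hYpsd
  have e1 : (P * (P₀ * B * P₀ - c • P₀)).trace
      = (P * (P₀ * B * P₀)).trace - c * (P * P₀).trace := by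
    rw [Matrix.mul_sub, Matrix.mul_smul, Matrix.trace_sub, Matrix.trace_smul, smul_eq_mul]
  have e2 : (P₀ * B * P₀ - c • P₀).trace = (P₀ * B).trace - c * (p : ℝ) := by
    rw [Matrix.trace_sub, Matrix.trace_smul, hPBP, smul_eq_mul, htrP₀]
  have e3 : (P * (c • (1 - P₀) - (1 - P₀) * B * (1 - P₀))).trace
      = c * ((p : ℝ) - (P * P₀).trace) - (P * ((1 - P₀) * B * (1 - P₀))).trace := by
    rw [Matrix.mul_sub, Matrix.mul_smul, Matrix.trace_sub, Matrix.trace_smul, smul_eq_mul]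
    congr 2
    rw [Matrix.mul_sub, Matrix.mul_one, Matrix.trace_sub, htrP]
  have e4 : (P * B).trace
      = (P * (P₀ * B * P₀)).trace + (P * ((1 - P₀) * B * (1 - P₀))).trace := by
    rw [← Matrix.trace_add, ← Matrix.mul_add, hdecomp]
  rw [e1, e2] at h1
  rw [e3] at h2
  linarith [h1, h2, e4.le, e4.ge]
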